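/- arXiv:math/0504522 — 2 statements merged into one kernel-verified Lean document; each statement's English description precedes it below -/
import Mathlib

section
/- Let G be a simple undirected graph on vertices {1,…,n} and let v be a vertex. Then the graph codes 𝒞(G) and 𝒞(G^v) are equivalent: there is a code equivalence map f of GF(4)^n with f(𝒞(G)) = 𝒞(G^v), where G^v is the local complement of G at v. -/
open Finset
open scoped Classical

noncomputable section

/-- Row `i` of the matrix `Γ + ωI` associated to a graph `G`. -/
def graphRow {n : ℕ} (ω : GaloisField 2 2) (G : SimpleGraph (Fin n)) (i : Fin n) :
    Fin n → GaloisField 2 2 :=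
  fun j => if i = j then ω else if G.Adj i j then 1 else 0

/-- The graph code of `G`: the `GF(2)`-linear span of the rows of `Γ + ωI`. -/
def graphCode {n : ℕ} (ω : GaloisField 2 2) (G : SimpleGraph (Fin n)) :
    Submodule (ZMod 2) (Fin n → GaloisField 2 2) :=
  Submodule.span (ZMod 2) (Set.range (graphRow ω G))

/-- A code equivalence map of `GF(4)^n`: a permutation of coordinates followed by
nonzero scalings and possible conjugations (`x ↦ x²`) of coordinates. -/
def IsEquivMap {n : ℕ}
    (f : (Fin n → GaloisField 2 2) → (Fin n → GaloisField 2 2)) : Prop :=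
  ∃ (σ : Equiv.Perm (Fin n)) (c : Fin n → GaloisField 2 2) (e : Fin n → ℕ),
    (∀ i, c i ≠ 0) ∧ (∀ i, e i = 1 ∨ e i = 2) ∧
    ∀ u i, f u i = c i * (u (σ i)) ^ (e i)

/-- Local complementation of a simple graph `G` at a vertex `v`: distinct vertices
`i, j` are adjacent in `G^v` iff exactly one of the following holds: `i` and `j`
are adjacent in `G`, or both `i` and `j` are neighbours of `v` in `G`. -/
def localComp {V : Type*} (G : SimpleGraph V) (v : V) : SimpleGraph V where
  Adj i j := i ≠ j ∧ Xor' (G.Adj i j) (G.Adj v i ∧ G.Adj v j)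
  symm := by
    constructor
    intro i j hij
    refine ⟨hij.1.symm, ?_⟩
    rw [G.adj_comm j i, and_comm]
    exact hij.2
  loopless := ⟨fun i h => h.1 rfl⟩

/- ### Auxiliary material -/

lemma gf_two : (2 : GaloisField 2 2) = 0 := by
  exact_mod_cast CharP.cast_eq_zero (GaloisField 2 2) 2

lemma gf_sq_add (a b : GaloisField 2 2) : (a + b) ^ 2 = a ^ 2 + b ^ 2 := by
  linear_combination (a * b) * gf_two

lemma gf_add_self (a : GaloisField 2 2) : a + a = 0 := by
  linear_combination a * gf_two

lemma localComp_adj {V : Type*} (G : SimpleGraph V) (v i j : V) :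
    (localComp G v).Adj i j ↔ i ≠ j ∧ Xor' (G.Adj i j) (G.Adj v i ∧ G.Adj v j) :=
  Iff.rfl

/-- The coordinatewise map implementing local complementation at `v`. -/
def lcFun {n : ℕ} (ω : GaloisField 2 2) (G : SimpleGraph (Fin n)) (v : Fin n) :
    (Fin n → GaloisField 2 2) → (Fin n → GaloisField 2 2) :=
  fun u i => (if i = v then ω ^ 2 else 1) *
      (u i) ^ (if i = v then 2 else if G.Adj v i then 2 else 1)

lemma lcFun_add {n : ℕ} (ω : GaloisField 2 2) (G : SimpleGraph (Fin n)) (v : Fin n)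
    (u w : Fin n → GaloisField 2 2) :
    lcFun ω G v (u + w) = lcFun ω G v u + lcFun ω G v w := by
  funext i
  simp only [lcFun, Pi.add_apply]
  split_ifs <;> simp [gf_sq_add, mul_add]

lemma lcFun_zero {n : ℕ} (ω : GaloisField 2 2) (G : SimpleGraph (Fin n)) (v : Fin n) :
    lcFun ω G v 0 = 0 := by
  funext i
  simp only [lcFun, Pi.zero_apply]
  split_ifs <;> simp

/-- The linear version of `lcFun`. -/
def lcLin {n : ℕ} (ω : GaloisField 2 2) (G : SimpleGraph (Fin n)) (v : Fin n) :
    (Fin n → GaloisField 2 2) →ₗ[ZMod 2] (Fin n → GaloisField 2 2) where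
  toFun := lcFun ω G v
  map_add' := lcFun_add ω G v
  map_smul' := by
    intro r u
    rcases (by decide : ∀ r : ZMod 2, r = 0 ∨ r = 1) r with h | h <;> subst h
    · simp [lcFun_zero]
    · simp

/-- Image of row `v`. -/
lemma lc_row_v {n : ℕ} (ω : GaloisField 2 2) (hω : ω ^ 2 = ω + 1)
    (G : SimpleGraph (Fin n)) (v : Fin n) :
    lcFun ω G v (graphRow ω G v) = graphRow ω (localComp G v) v := by
  funext j
  by_cases hj : v = j
  · subst hj
    have h1 : graphRow ω (localComp G v) v v = ω := by simp [graphRow]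
    have h2 : graphRow ω G v v = ω := by simp [graphRow]
    have h3 : lcFun ω G v (graphRow ω G v) v = ω ^ 2 * ω ^ 2 := by simp [lcFun, h2]
    rw [h1, h3]
    linear_combination (ω ^ 2 + ω + 2) * hω + (ω + 1) * gf_two
  · have hj' : j ≠ v := fun h => hj h.symm
    by_cases ha : G.Adj v j
    · have h' : (localComp G v).Adj v j := ⟨hj, Or.inl ⟨ha, fun h => G.loopless.irrefl v h.1⟩⟩
      simp [lcFun, graphRow, hj, hj', ha, h']
    · have h' : ¬ (localComp G v).Adj v j := by
        rintro ⟨-, h | h⟩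
        · exact ha h.1
        · exact G.loopless.irrefl v h.1.1
      simp [lcFun, graphRow, hj, hj', ha, h']

/-- Image of row `i` for `i` not adjacent to `v` and distinct from `v`. -/
lemma lc_row_far {n : ℕ} (ω : GaloisField 2 2)
    (G : SimpleGraph (Fin n)) (v i : Fin n) (hiv : i ≠ v) (hadj : ¬ G.Adj v i) :
    lcFun ω G v (graphRow ω G i) = graphRow ω (localComp G v) i := by
  funext j
  by_cases hij : i = j
  · subst hij
    simp [lcFun, graphRow, hiv, hadj]
  · by_cases hjv : j = v
    · have hav : ¬ G.Adj i v := fun h => hadj h.symm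
      have h' : ¬ (localComp G v).Adj i v := by
        rintro ⟨-, h | h⟩
        · exact hav h.1
        · exact G.loopless.irrefl v h.1.2
      simp [lcFun, graphRow, hij, hav, h', hjv, hiv]
    · have h' : (localComp G v).Adj i j ↔ G.Adj i j := by
        rw [localComp_adj]
        constructor
        · rintro ⟨-, h | h⟩
          · exact h.1
          · exact absurd h.1.1 hadj
        · exact fun h => ⟨hij, Or.inl ⟨h, fun hc => hadj hc.1⟩⟩
      by_cases hb : G.Adj i j <;> by_cases hc : G.Adj v j <;>
        simp [lcFun, graphRow, hij, hjv, hb, hc, h']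

/-- Image of row `i` for `i` a neighbour of `v`. -/
lemma lc_row_near {n : ℕ} (ω : GaloisField 2 2) (hω : ω ^ 2 = ω + 1)
    (G : SimpleGraph (Fin n)) (v i : Fin n) (hadj : G.Adj v i) :
    lcFun ω G v (graphRow ω G i) =
      graphRow ω (localComp G v) i + graphRow ω (localComp G v) v := by
  have hiv : i ≠ v := fun h => G.loopless.irrefl v (h ▸ hadj)
  have hvi : v ≠ i := fun h => hiv h.symm
  funext j
  simp only [Pi.add_apply]
  by_cases hij : i = j
  · subst hij
    have h' : (localComp G v).Adj v i := ⟨hvi, Or.inl ⟨hadj, fun h => G.loopless.irrefl v h.1⟩⟩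
    simp [lcFun, graphRow, hiv, hvi, hadj, h']
    linear_combination hω
  · by_cases hjv : j = v
    · have hav : G.Adj i v := hadj.symm
      have h' : (localComp G v).Adj i v :=
        ⟨hiv, Or.inl ⟨hav, fun h => G.loopless.irrefl v h.2⟩⟩
      simp [lcFun, graphRow, hij, hiv, hvi, hav, h', hjv]
      linear_combination hω
    · have hjv' : v ≠ j := fun h => hjv h.symm
      by_cases hc : G.Adj v j
      · -- j a neighbour of v, distinct from i and v
        have hvj : (localComp G v).Adj v j := ⟨hjv', Or.inl ⟨hc, fun h => G.loopless.irrefl v h.1⟩⟩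
        by_cases hb : G.Adj i j
        · have h' : ¬ (localComp G v).Adj i j := by
            rintro ⟨-, h | h⟩
            · exact h.2 ⟨hadj, hc⟩
            · exact h.2 hb
          simp [lcFun, graphRow, hij, hjv, hjv', hb, hc, h', hvj]
        · have h' : (localComp G v).Adj i j := ⟨hij, Or.inr ⟨⟨hadj, hc⟩, hb⟩⟩
          simp [lcFun, graphRow, hij, hjv, hjv', hb, hc, h', hvj, gf_add_self]
      · -- j not a neighbour of v
        have hvj : ¬ (localComp G v).Adj v j := by
          rintro ⟨-, h | h⟩
          · exact hc h.1
          · exact G.loopless.irrefl v h.1.1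
        have h' : (localComp G v).Adj i j ↔ G.Adj i j := by
          rw [localComp_adj]
          constructor
          · rintro ⟨-, h | h⟩
            · exact h.1
            · exact absurd h.1.2 hc
          · exact fun h => ⟨hij, Or.inl ⟨h, fun hx => hc hx.2⟩⟩
        by_cases hb : G.Adj i j <;>
          simp [lcFun, graphRow, hij, hjv, hjv', hb, hc, h', hvj]

theorem stmt7 (n : ℕ) (ω : GaloisField 2 2) (hω : ω ^ 2 = ω + 1)
    (G : SimpleGraph (Fin n)) (v : Fin n) :
    ∃ f : (Fin n → GaloisField 2 2) → (Fin n → GaloisField 2 2),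
      IsEquivMap f ∧
        f '' (graphCode ω G : Set (Fin n → GaloisField 2 2)) =
          (graphCode ω (localComp G v) : Set (Fin n → GaloisField 2 2)) := by
  classical
  have hω0 : ω ≠ 0 := by
    intro h
    rw [h] at hω
    simp at hω
  refine ⟨lcLin ω G v, ?_, ?_⟩
  · refine ⟨Equiv.refl _, fun i => if i = v then ω ^ 2 else 1,
      fun i => if i = v then 2 else if G.Adj v i then 2 else 1, ?_, ?_, ?_⟩
    · intro i
      by_cases h : i = v <;> simp [h, pow_ne_zero, hω0]
    · intro i
      by_cases h : i = v
      · simp [h]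
      · by_cases h2 : G.Adj v i <;> simp [h, h2]
    · intro u i
      rfl
  · have hmap : (graphCode ω G).map (lcLin ω G v) = graphCode ω (localComp G v) := by
      rw [graphCode, graphCode, Submodule.map_span]
      apply le_antisymm
      · rw [Submodule.span_le]
        rintro x ⟨u, ⟨i, rfl⟩, rfl⟩
        show lcFun ω G v (graphRow ω G i) ∈ _
        by_cases hiv : i = v
        · rw [hiv, lc_row_v ω hω G v]
          exact Submodule.subset_span ⟨v, rfl⟩
        · by_cases hadj : G.Adj v i
          · rw [lc_row_near ω hω G v i hadj]
            exact add_mem (Submodule.subset_span ⟨i, rfl⟩) (Submodule.subset_span ⟨v, rfl⟩)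
          · rw [lc_row_far ω G v i hiv hadj]
            exact Submodule.subset_span ⟨i, rfl⟩
      · rw [Submodule.span_le]
        rintro x ⟨i, rfl⟩
        by_cases hiv : i = v
        · rw [hiv, ← lc_row_v ω hω G v]
          exact Submodule.subset_span ⟨_, ⟨v, rfl⟩, rfl⟩
        · by_cases hadj : G.Adj v i
          · have key : graphRow ω (localComp G v) i =
                lcFun ω G v (graphRow ω G i) + lcFun ω G v (graphRow ω G v) := by
              rw [lc_row_near ω hω G v i hadj, lc_row_v ω hω G v]
              funext j
              simp only [Pi.add_apply]
              linear_combination (-(graphRow ω (localComp G v) v j)) * gf_two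
            rw [key]
            exact add_mem (Submodule.subset_span ⟨_, ⟨i, rfl⟩, rfl⟩)
              (Submodule.subset_span ⟨_, ⟨v, rfl⟩, rfl⟩)
          · rw [← lc_row_far ω G v i hiv hadj]
            exact Submodule.subset_span ⟨_, ⟨i, rfl⟩, rfl⟩
    calc (lcLin ω G v : (Fin n → GaloisField 2 2) → (Fin n → GaloisField 2 2)) ''
          (graphCode ω G : Set (Fin n → GaloisField 2 2))
        = ((graphCode ω G).map (lcLin ω G v) : Set (Fin n → GaloisField 2 2)) :=
          (Submodule.map_coe _ _).symm
      _ = (graphCode ω (localComp G v) : Set (Fin n → GaloisField 2 2)) := by rw [hmap]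
end
end

section
/- If C ⊆ GF(4)^n is a self-dual additive code (with respect to the Hermitian trace inner product) in which every codeword has even Hamming weight, then n is even. That is, Type II self-dual additive codes over GF(4) exist only in even lengths. -/
open Finset
open scoped Classical

noncomputable section

/-- The Hermitian trace inner product on `GF(4)^n`. -/
def trinner {n : ℕ} (u v : Fin n → GaloisField 2 2) : GaloisField 2 2 :=
  ∑ i, (u i * v i ^ 2 + u i ^ 2 * v i)

/-- The dual of a set of vectors with respect to the Hermitian trace inner product. -/
def trdual {n : ℕ} (C : Set (Fin n → GaloisField 2 2)) : Set (Fin n → GaloisField 2 2) :=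
  {v | ∀ u ∈ C, trinner u v = 0}

/-- The Hamming weight of a vector in `GF(4)^n`. -/
def wt {n : ℕ} (u : Fin n → GaloisField 2 2) : ℕ :=
  (Finset.univ.filter fun i => u i ≠ 0).card

abbrev F4 := GaloisField 2 2

instance : Fintype F4 := Fintype.ofFinite F4

lemma F4.card4 : Fintype.card F4 = 4 := by
  have h := GaloisField.card 2 2 (by norm_num)
  rw [Nat.card_eq_fintype_card] at h
  simpa using h

lemma F4.two_eq_zero : (2 : F4) = 0 := by
  exact_mod_cast CharP.cast_eq_zero F4 2

lemma F4.add_self (x : F4) : x + x = 0 := by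
  have h : (2 : F4) * x = 0 := by rw [F4.two_eq_zero, zero_mul]
  calc x + x = 2 * x := by ring
  _ = 0 := h

lemma F4.one_add_one : (1 : F4) + 1 = 0 := F4.add_self 1

lemma F4.pow4 (x : F4) : x ^ 4 = x := by
  have h := FiniteField.pow_card x
  rwa [F4.card4] at h

lemma F4.cube_ne {x : F4} (hx : x ≠ 0) : x ^ 3 = 1 := by
  have h := FiniteField.pow_card_sub_one_eq_one x hx
  rwa [F4.card4] at h

/-- being 0 or 1 -/
def isbit (x : F4) : Prop := x = 0 ∨ x = 1

lemma isbit_of_sq {x : F4} (h : x ^ 2 = x) : isbit x := by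
  have h0 : x * (x - 1) = 0 := by
    have he : x * (x - 1) = x ^ 2 - x := by ring
    rw [he, h, sub_self]
  rcases mul_eq_zero.1 h0 with h1 | h1
  · exact Or.inl h1
  · exact Or.inr (by linear_combination h1)

lemma isbit_add {a b : F4} (ha : isbit a) (hb : isbit b) : isbit (a + b) := by
  rcases ha with ha | ha <;> rcases hb with hb | hb <;> subst ha <;> subst hb <;>
    simp [isbit, F4.one_add_one]

lemma isbit_cube (x : F4) : isbit (x ^ 3) := by
  by_cases hx : x = 0
  · subst hx; left; simp
  · right; exact F4.cube_ne hx

lemma isbit_sum {ι : Type*} (s : Finset ι) (f : ι → F4) (h : ∀ i ∈ s, isbit (f i)) :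
    isbit (∑ i ∈ s, f i) := by
  classical
  induction s using Finset.induction_on with
  | empty => simp [isbit]
  | @insert a s hx ih =>
    rw [Finset.sum_insert hx]
    exact isbit_add (h a (Finset.mem_insert_self a s))
      (ih fun i hi => h i (Finset.mem_insert_of_mem hi))

/-- the quadratic form: `Q u = ∑ (u i)^3`, equal to the weight mod 2. -/
def Qf {n : ℕ} (u : Fin n → F4) : F4 := ∑ i, (u i) ^ 3

lemma isbit_Qf {n : ℕ} (u : Fin n → F4) : isbit (Qf u) :=
  isbit_sum _ _ fun i _ => isbit_cube (u i)

lemma isbit_trinner {n : ℕ} (u v : Fin n → F4) : isbit (trinner u v) := by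
  apply isbit_sum
  intro i _
  apply isbit_of_sq
  have h : (u i * v i ^ 2 + u i ^ 2 * v i) ^ 2
      = u i ^ 2 * (v i ^ 4) + (u i ^ 4) * v i ^ 2 + 2 * (u i ^ 3 * v i ^ 3) := by ring
  rw [h, F4.pow4 (u i), F4.pow4 (v i), F4.two_eq_zero]
  ring

lemma Qf_add {n : ℕ} (u v : Fin n → F4) : Qf (u + v) = Qf u + Qf v + trinner u v := by
  unfold Qf trinner
  rw [← Finset.sum_add_distrib, ← Finset.sum_add_distrib]
  apply Finset.sum_congr rfl
  intro i _
  have hpt : ((u + v) i) = u i + v i := rfl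
  rw [hpt]
  have h : (u i + v i) ^ 3
      = u i ^ 3 + v i ^ 3 + (u i * v i ^ 2 + u i ^ 2 * v i)
        + 2 * (u i ^ 2 * v i + u i * v i ^ 2) := by ring
  rw [h, F4.two_eq_zero]
  ring

lemma trinner_add_left {n : ℕ} (u u' v : Fin n → F4) :
    trinner (u + u') v = trinner u v + trinner u' v := by
  unfold trinner
  rw [← Finset.sum_add_distrib]
  apply Finset.sum_congr rfl
  intro i _
  have hpt : ((u + u') i) = u i + u' i := rfl
  rw [hpt]
  have h : ((u i + u' i) * v i ^ 2 + (u i + u' i) ^ 2 * v i)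
      = (u i * v i ^ 2 + u i ^ 2 * v i) + (u' i * v i ^ 2 + u' i ^ 2 * v i)
        + 2 * (u i * u' i * v i) := by ring
  rw [h, F4.two_eq_zero]
  ring

lemma Qf_eq_wt {n : ℕ} (u : Fin n → F4) : Qf u = (wt u : F4) := by
  unfold Qf wt
  rw [Finset.card_filter, Nat.cast_sum]
  rw [← Finset.sum_filter_add_sum_filter_not Finset.univ (fun i => u i ≠ 0)]
  rw [← Finset.sum_filter_add_sum_filter_not Finset.univ (fun i => u i ≠ 0)
    (fun i => ((if u i ≠ 0 then 1 else 0 : ℕ) : F4))]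
  congr 1
  · apply Finset.sum_congr rfl
    intro i hi
    simp only [Finset.mem_filter] at hi
    rw [F4.cube_ne hi.2]
    simp [hi.2]
  · apply Finset.sum_congr rfl
    intro i hi
    simp only [Finset.mem_filter, not_not] at hi
    rw [hi.2]
    simp

lemma Qf_eq_zero_of_even {n : ℕ} (u : Fin n → F4) (h : Even (wt u)) : Qf u = 0 := by
  rw [Qf_eq_wt]
  obtain ⟨k, hk⟩ := h
  rw [hk]
  push_cast
  rw [show ((k : F4) + k) = 2 * k by ring, F4.two_eq_zero, zero_mul]

/-- the sign character -/
def chi (x : F4) : ℤ := if x = 0 then 1 else -1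

lemma chi_add {a b : F4} (ha : isbit a) (hb : isbit b) : chi (a + b) = chi a * chi b := by
  rcases ha with ha | ha <;> rcases hb with hb | hb <;> subst ha <;> subst hb <;>
    simp [chi, F4.one_add_one]

lemma chi_sum {ι : Type*} (s : Finset ι) (f : ι → F4) (h : ∀ i ∈ s, isbit (f i)) :
    chi (∑ i ∈ s, f i) = ∏ i ∈ s, chi (f i) := by
  classical
  induction s using Finset.induction_on with
  | empty => simp [chi]
  | @insert a s hx ih =>
    rw [Finset.sum_insert hx, Finset.prod_insert hx,
      chi_add (h a (Finset.mem_insert_self a s))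
        (isbit_sum _ _ fun i hi => h i (Finset.mem_insert_of_mem hi)),
      ih fun i hi => h i (Finset.mem_insert_of_mem hi)]

lemma chi_univ_sum : ∑ x : F4, chi (x ^ 3) = -2 := by
  have h : ∀ x : F4, chi (x ^ 3) = (if x = 0 then (2 : ℤ) else 0) - 1 := by
    intro x
    by_cases hx : x = 0
    · subst hx; simp [chi]
    · rw [F4.cube_ne hx]
      simp [chi, hx]
  rw [Finset.sum_congr rfl fun x _ => h x, Finset.sum_sub_distrib]
  rw [Finset.sum_ite_eq' Finset.univ (0 : F4) (fun _ => (2:ℤ))]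
  simp [Finset.card_univ, F4.card4]

theorem stmt11 (n : ℕ) (C : Submodule (ZMod 2) (Fin n → GaloisField 2 2))
    (hC : (C : Set (Fin n → GaloisField 2 2)) = trdual (C : Set (Fin n → GaloisField 2 2)))
    (hII : ∀ u ∈ C, Even (wt u)) :
    Even n := by
  classical
  set CF : Finset (Fin n → F4) := Set.toFinset (C : Set (Fin n → F4)) with hCFdef
  have hmem : ∀ u, u ∈ CF ↔ u ∈ C := by
    intro u; rw [hCFdef, Set.mem_toFinset, SetLike.mem_coe]
  have hQ0 : ∀ u ∈ CF, Qf u = 0 := fun u hu =>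
    Qf_eq_zero_of_even u (hII u ((hmem u).1 hu))
  have hTC : ∀ u ∈ CF, ∀ v ∈ CF, trinner u v = 0 := by
    intro u hu v hv
    have hv' : (v : Fin n → F4) ∈ trdual (C : Set (Fin n → F4)) := by
      rw [← hC]; exact (hmem v).1 hv
    exact hv' u ((hmem u).1 hu)
  -- character sum over C vanishes for v outside C
  have hker : ∀ v : Fin n → F4, v ∉ CF → ∑ u ∈ CF, chi (trinner u v) = 0 := by
    intro v hv
    have hv' : v ∉ trdual (C : Set (Fin n → F4)) := by
      rw [← hC]; intro h; exact hv ((hmem v).2 h)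
    obtain ⟨u₀, hu₀C, hu₀⟩ : ∃ u₀ ∈ (C : Set (Fin n → F4)), trinner u₀ v ≠ 0 := by
      by_contra h
      push_neg at h
      exact hv' fun u hu => h u hu
    have h1 : trinner u₀ v = 1 := (isbit_trinner u₀ v).resolve_left hu₀
    have hinv : ∀ a : Fin n → F4, a + u₀ + u₀ = a := by
      intro a
      funext i
      show a i + u₀ i + u₀ i = a i
      rw [add_assoc, F4.add_self, add_zero]
    have hmem' : ∀ a ∈ CF, a + u₀ ∈ CF := by
      intro a ha
      exact (hmem _).2 (C.add_mem ((hmem a).1 ha) hu₀C)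
    have hneg : ∀ u : Fin n → F4, chi (trinner (u + u₀) v) = - chi (trinner u v) := by
      intro u
      rw [trinner_add_left, chi_add (isbit_trinner u v) (isbit_trinner u₀ v), h1]
      simp [chi]
    have hbij : ∑ u ∈ CF, chi (trinner u v) = ∑ u ∈ CF, chi (trinner (u + u₀) v) :=
      Finset.sum_nbij' (fun u => u + u₀) (fun u => u + u₀)
        hmem' hmem' (fun a _ => hinv a) (fun a _ => hinv a)
        (fun a _ => by rw [hinv a])
    have hneg' : ∑ u ∈ CF, chi (trinner u v) = - ∑ u ∈ CF, chi (trinner u v) := by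
      conv_lhs => rw [hbij]
      rw [Finset.sum_congr rfl fun u _ => hneg u, Finset.sum_neg_distrib]
    linarith
  -- the inner sum for each v
  have hcount1 : ∀ v : Fin n → F4,
      ∑ u ∈ CF, chi (Qf (u + v)) = if v ∈ CF then (CF.card : ℤ) else 0 := by
    intro v
    by_cases hv : v ∈ CF
    · rw [if_pos hv]
      have h1 : ∀ u ∈ CF, chi (Qf (u + v)) = 1 := by
        intro u hu
        rw [Qf_add, hQ0 u hu, hQ0 v hv, hTC u hu v hv]
        simp [chi]
      rw [Finset.sum_congr rfl h1, Finset.sum_const, nsmul_eq_mul, mul_one]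
    · rw [if_neg hv]
      have h1 : ∀ u ∈ CF, chi (Qf (u + v)) = chi (Qf v) * chi (trinner u v) := by
        intro u hu
        rw [Qf_add, hQ0 u hu, zero_add,
          chi_add (isbit_Qf v) (isbit_trinner u v)]
      rw [Finset.sum_congr rfl h1, ← Finset.mul_sum, hker v hv, mul_zero]
  have hS1 : ∑ v : Fin n → F4, ∑ u ∈ CF, chi (Qf (u + v)) = (CF.card : ℤ) ^ 2 := by
    rw [Finset.sum_congr rfl (fun v _ => hcount1 v), Finset.sum_ite_mem,
      Finset.univ_inter, Finset.sum_const, nsmul_eq_mul]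
    ring
  have hS2 : ∑ v : Fin n → F4, ∑ u ∈ CF, chi (Qf (u + v)) = (CF.card : ℤ) * (-2) ^ n := by
    rw [Finset.sum_comm]
    have hinner : ∀ u : Fin n → F4, ∑ v : Fin n → F4, chi (Qf (u + v)) = (-2) ^ n := by
      intro u
      have he : ∑ v : Fin n → F4, chi (Qf (u + v)) = ∑ w : Fin n → F4, chi (Qf w) :=
        Equiv.sum_comp (Equiv.addLeft u) (fun w => chi (Qf w))
      rw [he]
      have hsplit : ∀ w : Fin n → F4, chi (Qf w) = ∏ i, chi (w i ^ 3) := by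
        intro w
        exact chi_sum Finset.univ _ fun i _ => isbit_cube (w i)
      have hp := Fintype.sum_pow (fun x : F4 => chi (x ^ 3)) n
      rw [chi_univ_sum] at hp
      rw [Finset.sum_congr rfl (fun w _ => hsplit w)]
      exact hp.symm
    rw [Finset.sum_congr rfl (fun u _ => hinner u), Finset.sum_const, nsmul_eq_mul]
  have hcardpos : 0 < CF.card := Finset.card_pos.2 ⟨0, (hmem 0).2 C.zero_mem⟩
  have hne : (CF.card : ℤ) ≠ 0 := Nat.cast_ne_zero.2 hcardpos.ne'
  have hkey : (CF.card : ℤ) = (-2) ^ n := by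
    have h := hS1.symm.trans hS2
    apply mul_left_cancel₀ hne
    rw [← h]; ring
  rcases Nat.even_or_odd n with he | ho
  · exact he
  · exfalso
    have hneg : (-2 : ℤ) ^ n < 0 := Odd.pow_neg ho (by norm_num)
    rw [← hkey] at hneg
    have hpos : (0:ℤ) < CF.card := by exact_mod_cast hcardpos
    linarith
end
end
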